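/- arXiv:2007.06332 — 6 statements merged into one kernel-verified Lean document; each statement's English description precedes it below -/
import Mathlib

section
/- Let k_p, k_d > 0 and let φ : ℝ → ℝ³ be a twice differentiable curve satisfying ‖φ(t)‖ = 1 and ⟨φ(t), φ̇(t)⟩ = 0 for all t, which solves the closed-loop regulation equation φ̈(t) + ‖φ̇(t)‖²·φ(t) = −k_p·(φ(t) × (φ(t) × e₃)) − k_d·φ̇(t). Then the Lyapunov function V₁(t) = k_p·(1 − ⟨φ(t), e₃⟩) + (1/2)·‖φ̇(t)‖² satisfies dV₁/dt = −k_d·‖φ̇(t)‖² for all t; in particular V₁ is nonincreasing. -/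
open scoped InnerProductSpace

noncomputable section

/-- ℝ³ with the Euclidean inner product and norm. -/
abbrev E3 := EuclideanSpace ℝ (Fin 3)

/-- The cross product on ℝ³. -/
def cross (a b : E3) : E3 :=
  WithLp.toLp 2 ![a 1 * b 2 - a 2 * b 1, a 2 * b 0 - a 0 * b 2, a 0 * b 1 - a 1 * b 0]

/-- The third standard basis vector e₃ = (0,0,1). -/
def e3 : E3 := WithLp.toLp 2 ![0, 0, 1]

lemma inner_cross_triple (a v : E3) (ha : ‖a‖ = 1) (hav : ⟪a, v⟫_ℝ = 0) :
    ⟪v, cross a (cross a e3)⟫_ℝ = -⟪v, e3⟫_ℝ := by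
  have h1 : ⟪a, a⟫_ℝ = 1 := by
    rw [real_inner_self_eq_norm_sq, ha]; norm_num
  simp only [PiLp.inner_apply, RCLike.inner_apply, conj_trivial, Fin.sum_univ_three,
    cross, e3, PiLp.toLp_apply, Matrix.cons_val_zero, Matrix.cons_val_one, Matrix.head_cons,
    Matrix.cons_val_two, Matrix.tail_cons] at *
  linear_combination a 2 * hav - v 2 * h1

lemma lyap_deriv_eq (kp kd : ℝ)
    (φ : ℝ → E3)
    (hφ : Differentiable ℝ φ) (hφ' : Differentiable ℝ (deriv φ))
    (hsph : ∀ t, ‖φ t‖ = 1)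
    (horth : ∀ t, ⟪φ t, deriv φ t⟫_ℝ = 0)
    (heqn : ∀ t, deriv (deriv φ) t + ‖deriv φ t‖ ^ 2 • φ t =
      -(kp • cross (φ t) (cross (φ t) e3)) - kd • deriv φ t) :
    ∀ t, HasDerivAt (fun s => kp * (1 - ⟪φ s, e3⟫_ℝ) + (1 / 2) * ‖deriv φ s‖ ^ 2)
        (-(kd * ‖deriv φ t‖ ^ 2)) t := by
  intro t
  have hfun : (fun s => kp * (1 - ⟪φ s, e3⟫_ℝ) + (1 / 2) * ‖deriv φ s‖ ^ 2)
      = (fun s => kp * (1 - ⟪φ s, e3⟫_ℝ) + (1 / 2) * ⟪deriv φ s, deriv φ s⟫_ℝ) := by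
    funext s; rw [real_inner_self_eq_norm_sq]
  rw [hfun]
  set v := deriv φ t with hv
  set dd := deriv (deriv φ) t with hdd
  have h1 : HasDerivAt (fun s => ⟪φ s, e3⟫_ℝ) (⟪φ t, (0 : E3)⟫_ℝ + ⟪v, e3⟫_ℝ) t :=
    (hφ t).hasDerivAt.inner ℝ (hasDerivAt_const t e3)
  have h2 : HasDerivAt (fun s => ⟪deriv φ s, deriv φ s⟫_ℝ) (⟪v, dd⟫_ℝ + ⟪dd, v⟫_ℝ) t :=
    (hφ' t).hasDerivAt.inner ℝ (hφ' t).hasDerivAt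
  have h3 := ((h1.const_sub 1).const_mul kp).add (h2.const_mul (1 / 2))
  convert h3 using 1
  case e'_4 => rfl
  case e'_5 => rfl
  case e'_8 => rfl
  -- compute ⟪v, dd⟫
  have hdd' : dd = -(kp • cross (φ t) (cross (φ t) e3)) - kd • v - ‖v‖ ^ 2 • φ t := by
    have := heqn t
    rw [← hv, ← hdd] at this
    linear_combination (norm := module) this
  have hinner : ⟪v, dd⟫_ℝ = kp * ⟪v, e3⟫_ℝ - kd * ⟪v, v⟫_ℝ := by
    rw [hdd']
    rw [inner_sub_right, inner_sub_right, inner_neg_right, inner_smul_right,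
      inner_smul_right, inner_smul_right]
    rw [inner_cross_triple (φ t) v (hsph t) (horth t)]
    have : ⟪v, φ t⟫_ℝ = 0 := by rw [real_inner_comm]; exact horth t
    rw [this]; ring
  have hsymm : ⟪dd, v⟫_ℝ = ⟪v, dd⟫_ℝ := real_inner_comm _ _
  rw [hsymm, hinner, inner_zero_right, real_inner_self_eq_norm_sq]
  ring

/-- For a twice differentiable curve φ on the unit 2-sphere solving the
closed-loop PD regulation equation
`φ̈ + ‖φ̇‖²φ = −k_p (φ × (φ × e₃)) − k_d φ̇`,
the Lyapunov function `V₁ = k_p (1 − ⟨φ, e₃⟩) + ½‖φ̇‖²` satisfies `V̇₁ = −k_d ‖φ̇‖²`;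
in particular `V₁` is nonincreasing. -/
theorem lyapunov_derivative_regulation_on_sphere
    (kp kd : ℝ) (hkp : 0 < kp) (hkd : 0 < kd)
    (φ : ℝ → E3)
    (hφ : Differentiable ℝ φ) (hφ' : Differentiable ℝ (deriv φ))
    (hsph : ∀ t, ‖φ t‖ = 1)
    (horth : ∀ t, ⟪φ t, deriv φ t⟫_ℝ = 0)
    (heqn : ∀ t, deriv (deriv φ) t + ‖deriv φ t‖ ^ 2 • φ t =
      -(kp • cross (φ t) (cross (φ t) e3)) - kd • deriv φ t) :
    (∀ t, HasDerivAt (fun s => kp * (1 - ⟪φ s, e3⟫_ℝ) + (1 / 2) * ‖deriv φ s‖ ^ 2)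
        (-(kd * ‖deriv φ t‖ ^ 2)) t) ∧
    (∀ s t, s ≤ t →
      kp * (1 - ⟪φ t, e3⟫_ℝ) + (1 / 2) * ‖deriv φ t‖ ^ 2 ≤
      kp * (1 - ⟪φ s, e3⟫_ℝ) + (1 / 2) * ‖deriv φ s‖ ^ 2) := by
  have hd := lyap_deriv_eq kp kd φ hφ hφ' hsph horth heqn
  refine ⟨hd, ?_⟩
  have hanti : Antitone (fun s => kp * (1 - ⟪φ s, e3⟫_ℝ) + (1 / 2) * ‖deriv φ s‖ ^ 2) := by
    apply antitone_of_deriv_nonpos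
    · exact fun t => (hd t).differentiableAt
    · intro t
      rw [(hd t).deriv]
      have : 0 ≤ kd * ‖deriv φ t‖ ^ 2 := by positivity
      linarith
  exact fun s t hst => hanti hst
end
end

section
/- Let k_p, k_d > 0 and let φ : ℝ → ℝ³ be a twice differentiable curve, defined for all t ≥ 0, satisfying ‖φ(t)‖ = 1 and ⟨φ(t), φ̇(t)⟩ = 0 for all t, which solves φ̈(t) + ‖φ̇(t)‖²·φ(t) = −k_p·(φ(t) × (φ(t) × e₃)) − k_d·φ̇(t). If the initial energy satisfies k_p·(1 − ⟨φ(0), e₃⟩) + (1/2)·‖φ̇(0)‖² < 2·k_p, then φ(t) → e₃ and φ̇(t) → 0 as t → ∞; i.e., the equilibrium (e₃, 0) is asymptotically stable and its region of attraction contains the sublevel set {V₁ < 2k_p} of the energy V₁ = k_p(1 − ⟨φ, e₃⟩) + (1/2)‖φ̇‖². -/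
open scoped InnerProductSpace

noncomputable section

lemma inner_e3_right (x : E3) : ⟪x, e3⟫_ℝ = x 2 := by
  simp [e3, PiLp.inner_apply, Fin.sum_univ_three]

lemma inner_e3_e3 : ⟪e3, e3⟫_ℝ = 1 := by
  simp only [e3, PiLp.inner_apply, Fin.sum_univ_three, RCLike.inner_apply, conj_trivial]
  simp

lemma triple (x : E3) (hx : ‖x‖ = 1) :
    cross x (cross x e3) = ⟪x, e3⟫_ℝ • x - e3 := by
  have h : x 0 * x 0 + x 1 * x 1 + x 2 * x 2 = 1 := by
    have h1 : ⟪x, x⟫_ℝ = 1 := by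
      rw [real_inner_self_eq_norm_sq, hx]; norm_num
    simp only [PiLp.inner_apply, Fin.sum_univ_three, RCLike.inner_apply, conj_trivial] at h1
    linarith
  ext i
  fin_cases i <;>
    simp [cross, e3, PiLp.inner_apply, Fin.sum_univ_three, PiLp.smul_apply, PiLp.sub_apply,
      smul_eq_mul] <;> ring_nf <;> nlinarith [h]

lemma amgm2 {b n q c d : ℝ} (hn : 0 ≤ n) (hq : 0 ≤ q)
    (hb : b ^ 2 ≤ n * q) : 2 * (c * d) * b ≤ d ^ 2 * n + c ^ 2 * q := by
  rcases le_or_gt (d ^ 2 * n + c ^ 2 * q + 2 * (c * d) * b) 0 with h | h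
  · nlinarith [mul_nonneg (mul_nonneg (sq_nonneg d) hn) (mul_nonneg (sq_nonneg c) hq)]
  · nlinarith [sq_nonneg (d ^ 2 * n - c ^ 2 * q),
      mul_nonneg (mul_nonneg (sq_nonneg c) (sq_nonneg d)) (sub_nonneg.2 hb)]

lemma anti_of_deriv {f : ℝ → ℝ} (hf : Differentiable ℝ f)
    (hd : ∀ t, 0 < t → deriv f t ≤ 0) : ∀ t, 0 ≤ t → f t ≤ f 0 := by
  have h := antitoneOn_of_deriv_nonpos (convex_Ici (0:ℝ)) hf.continuous.continuousOn
    (fun t _ => (hf t).differentiableWithinAt)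
    (by intro t ht; rw [interior_Ici] at ht; exact hd t ht)
  intro t ht
  exact h Set.self_mem_Ici ht ht

lemma decay {f : ℝ → ℝ} {l : ℝ} (hl : 0 < l) (hf : Differentiable ℝ f)
    (hd : ∀ t, 0 < t → deriv f t ≤ -l * f t) :
    ∀ t, 0 ≤ t → f t ≤ f 0 * Real.exp (-(l * t)) := by
  have hexp : ∀ t : ℝ, HasDerivAt (fun s => Real.exp (l * s)) (l * Real.exp (l * t)) t := by
    intro t
    have := (Real.hasDerivAt_exp (l * t)).comp t ((hasDerivAt_id t).const_mul l)
    simpa [mul_comm, Function.comp_def] using this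
  have hg : ∀ t, HasDerivAt (fun s => f s * Real.exp (l * s))
      (deriv f t * Real.exp (l * t) + f t * (l * Real.exp (l * t))) t :=
    fun t => ((hf t).hasDerivAt).mul (hexp t)
  have key : ∀ t, 0 ≤ t → f t * Real.exp (l * t) ≤ f 0 := by
    have := anti_of_deriv (f := fun s => f s * Real.exp (l * s))
      (fun t => ((hg t).differentiableAt))
      (by
        intro t ht
        rw [(hg t).deriv]
        have h1 := hd t ht
        have h2 : (0:ℝ) < Real.exp (l * t) := Real.exp_pos _
        nlinarith)
    intro t ht
    simpa using this t ht
  intro t ht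
  have h2 : (0:ℝ) < Real.exp (l * t) := Real.exp_pos _
  rw [Real.exp_neg, ← div_eq_mul_inv, le_div_iff₀ h2]
  exact key t ht

set_option maxHeartbeats 3200000 in
/-- For a twice differentiable curve φ on the unit 2-sphere, defined for
all t ≥ 0, solving the closed-loop PD regulation equation
`φ̈ + ‖φ̇‖²φ = −k_p (φ × (φ × e₃)) − k_d φ̇`,
if the initial energy `V₁(0) = k_p (1 − ⟨φ(0), e₃⟩) + ½‖φ̇(0)‖²` is below `2 k_p`, then
`φ(t) → e₃` and `φ̇(t) → 0` as `t → ∞`. -/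
theorem asymptotic_stability_regulation_on_sphere
    (kp kd : ℝ) (hkp : 0 < kp) (hkd : 0 < kd)
    (φ : ℝ → E3)
    (hφ : Differentiable ℝ φ) (hφ' : Differentiable ℝ (deriv φ))
    (hsph : ∀ t, 0 ≤ t → ‖φ t‖ = 1)
    (horth : ∀ t, 0 ≤ t → ⟪φ t, deriv φ t⟫_ℝ = 0)
    (heqn : ∀ t, 0 ≤ t → deriv (deriv φ) t + ‖deriv φ t‖ ^ 2 • φ t =
      -(kp • cross (φ t) (cross (φ t) e3)) - kd • deriv φ t)
    (hinit : kp * (1 - ⟪φ 0, e3⟫_ℝ) + (1 / 2) * ‖deriv φ 0‖ ^ 2 < 2 * kp) :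
    Filter.Tendsto φ Filter.atTop (nhds e3) ∧
    Filter.Tendsto (deriv φ) Filter.atTop (nhds 0) := by
  set A : ℝ → ℝ := fun t => ⟪φ t, e3⟫_ℝ with hAdef
  set B : ℝ → ℝ := fun t => ⟪deriv φ t, e3⟫_ℝ with hBdef
  set N : ℝ → ℝ := fun t => ⟪deriv φ t, deriv φ t⟫_ℝ with hNdef
  have hNnorm : ∀ t, N t = ‖deriv φ t‖ ^ 2 := fun t => real_inner_self_eq_norm_sq _
  have hN0 : ∀ t, 0 ≤ N t := fun t => real_inner_self_nonneg
  have hφφ : ∀ t, 0 ≤ t → ⟪φ t, φ t⟫_ℝ = 1 := by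
    intro t ht; rw [real_inner_self_eq_norm_sq, hsph t ht]; norm_num
  have hpφ : ∀ t, 0 ≤ t → ⟪deriv φ t, φ t⟫_ℝ = 0 := by
    intro t ht; rw [real_inner_comm]; exact horth t ht
  have hA1 : ∀ t, 0 ≤ t → A t ≤ 1 := by
    intro t ht
    have h := real_inner_le_norm (φ t) e3
    have : ‖e3‖ = 1 := by
      have := inner_e3_e3
      have h2 := real_inner_self_eq_norm_sq e3
      nlinarith [norm_nonneg e3]
    rw [hsph t ht, this] at h
    simpa using h
  -- derivatives of scalar quantities
  have hdφ : ∀ t, HasDerivAt φ (deriv φ t) t := fun t => (hφ t).hasDerivAt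
  have hdp : ∀ t, HasDerivAt (deriv φ) (deriv (deriv φ) t) t := fun t => (hφ' t).hasDerivAt
  have hA' : ∀ t, HasDerivAt A (B t) t := by
    intro t
    have := HasDerivAt.inner ℝ (hdφ t) (hasDerivAt_const t e3)
    simpa using this
  have hB' : ∀ t, HasDerivAt B (⟪deriv (deriv φ) t, e3⟫_ℝ) t := by
    intro t
    have := HasDerivAt.inner ℝ (hdp t) (hasDerivAt_const t e3)
    simpa using this
  have hN' : ∀ t, HasDerivAt N (2 * ⟪deriv φ t, deriv (deriv φ) t⟫_ℝ) t := by
    intro t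
    have := HasDerivAt.inner ℝ (hdp t) (hdp t)
    have h2 : ⟪deriv φ t, deriv (deriv φ) t⟫_ℝ + ⟪deriv (deriv φ) t, deriv φ t⟫_ℝ =
        2 * ⟪deriv φ t, deriv (deriv φ) t⟫_ℝ := by
      rw [real_inner_comm (deriv (deriv φ) t)]; ring
    rw [h2] at this
    exact this
  -- the acceleration
  have acc : ∀ t, 0 ≤ t → deriv (deriv φ) t =
      -(N t • φ t) - kp • (A t • φ t - e3) - kd • deriv φ t := by
    intro t ht
    have h := heqn t ht
    rw [triple _ (hsph t ht)] at h
    have h2 : deriv (deriv φ) t =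
        -(kp • (A t • φ t - e3)) - kd • deriv φ t - ‖deriv φ t‖ ^ 2 • φ t := by
      rw [eq_sub_iff_add_eq]
      calc deriv (deriv φ) t + ‖deriv φ t‖ ^ 2 • φ t
          = -(kp • (⟪φ t, e3⟫_ℝ • φ t - e3)) - kd • deriv φ t := h
        _ = -(kp • (A t • φ t - e3)) - kd • deriv φ t := rfl
    rw [h2, hNnorm]
    module
  have hdd_e3 : ∀ t, 0 ≤ t → ⟪deriv (deriv φ) t, e3⟫_ℝ =
      -(N t * A t) - kp * (A t * A t - 1) - kd * B t := by
    intro t ht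
    rw [acc t ht]
    simp only [inner_sub_left, inner_neg_left, real_inner_smul_left, inner_e3_e3,
      hAdef, hBdef, hNdef]
    try ring
  have hdd_p : ∀ t, 0 ≤ t → ⟪deriv φ t, deriv (deriv φ) t⟫_ℝ = kp * B t - kd * N t := by
    intro t ht
    rw [acc t ht]
    simp only [inner_sub_right, inner_neg_right, real_inner_smul_right, hpφ t ht,
      hAdef, hBdef, hNdef]
    try ring
  -- the energy
  set V : ℝ → ℝ := fun t => kp * (1 - A t) + (1 / 2) * N t with hVdef
  have hV' : ∀ t, HasDerivAt V
      (kp * (0 - B t) + (1 / 2) * (2 * ⟪deriv φ t, deriv (deriv φ) t⟫_ℝ)) t := by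
    intro t
    exact (((hasDerivAt_const t (1:ℝ)).sub (hA' t)).const_mul kp).add ((hN' t).const_mul (1/2))
  have hVdiff : Differentiable ℝ V := fun t => ((hV' t).differentiableAt)
  have hVderiv : ∀ t, 0 ≤ t → deriv V t = -(kd * N t) := by
    intro t ht
    rw [(hV' t).deriv, hdd_p t ht]
    ring
  have hVmono : ∀ t, 0 ≤ t → V t ≤ V 0 := by
    refine anti_of_deriv hVdiff (fun t ht => ?_)
    rw [hVderiv t ht.le]
    nlinarith [hN0 t]
  have hV0 : V 0 < 2 * kp := by
    have h : V 0 = kp * (1 - ⟪φ 0, e3⟫_ℝ) + (1 / 2) * ‖deriv φ 0‖ ^ 2 := by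
      rw [hVdef]; simp only [hAdef, hNdef, real_inner_self_eq_norm_sq]
    rw [h]; exact hinit
  have hVlb : ∀ t, 0 ≤ t → kp * (1 - A t) ≤ V t := by
    intro t ht
    rw [hVdef]
    nlinarith [hN0 t]
  obtain ⟨m, hm, hAm⟩ : ∃ m : ℝ, -1 < m ∧ ∀ t, 0 ≤ t → m ≤ A t := by
    refine ⟨1 - V 0 / kp, ?_, ?_⟩
    · have : V 0 / kp < 2 := by rw [div_lt_iff₀ hkp]; linarith
      linarith
    · intro t ht
      have h1 : kp * (1 - A t) ≤ V 0 := le_trans (hVlb t ht) (hVmono t ht)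
      have h2 : 1 - A t ≤ V 0 / kp := by rw [le_div_iff₀ hkp]; linarith [h1]
      linarith
  have h1m : 0 < 1 + m := by linarith
  -- the cross-term coefficient
  obtain ⟨ε, hε, hε1, hε2, hε3⟩ :
      ∃ ε : ℝ, 0 < ε ∧ ε ≤ kp / 2 ∧ ε ≤ 1 / 2 ∧ ε * (2 * kp + kd ^ 2) ≤ kd * kp := by
    have hden : 0 < 2 * kp + kd ^ 2 := by positivity
    refine ⟨min (min (kp / 2) (1 / 2)) (kd * kp / (2 * kp + kd ^ 2)),
      lt_min (lt_min (by positivity) (by norm_num)) (by positivity),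
      le_trans (min_le_left _ _) (min_le_left _ _),
      le_trans (min_le_left _ _) (min_le_right _ _), ?_⟩
    have h := min_le_right (min (kp / 2) (1 / 2)) (kd * kp / (2 * kp + kd ^ 2))
    rw [le_div_iff₀ hden] at h
    exact h
  -- Cauchy–Schwarz bound on B
  have hb2 : ∀ t, 0 ≤ t → B t ^ 2 ≤ N t * (1 - A t * A t) := by
    intro t ht
    have hcs := real_inner_mul_inner_self_le (deriv φ t) (e3 - A t • φ t)
    have h1 : ⟪deriv φ t, e3 - A t • φ t⟫_ℝ = B t := by
      simp only [inner_sub_right, real_inner_smul_right, hpφ t ht, hBdef]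
      ring
    have h2 : ⟪e3 - A t • φ t, e3 - A t • φ t⟫_ℝ = 1 - A t * A t := by
      have h4 : ⟪e3, φ t⟫_ℝ = ⟪φ t, e3⟫_ℝ := real_inner_comm _ _
      simp only [inner_sub_left, inner_sub_right, real_inner_smul_left, real_inner_smul_right,
        inner_e3_e3, hφφ t ht, h4, hAdef]
      try ring
    rw [h1, h2] at hcs
    have hNt : N t = ⟪deriv φ t, deriv φ t⟫_ℝ := rfl
    rw [pow_two, hNt]
    exact hcs
  -- the strict Lyapunov function
  set W : ℝ → ℝ := fun t => V t - ε * B t with hWdef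
  have hW' : ∀ t, HasDerivAt W
      ((kp * (0 - B t) + (1 / 2) * (2 * ⟪deriv φ t, deriv (deriv φ) t⟫_ℝ)) -
        ε * ⟪deriv (deriv φ) t, e3⟫_ℝ) t :=
    fun t => (hV' t).sub ((hB' t).const_mul ε)
  have hWdiff : Differentiable ℝ W := fun t => ((hW' t).differentiableAt)
  obtain ⟨c0, hc0, hc0a, hc0b⟩ :
      ∃ c0 : ℝ, 0 < c0 ∧ c0 ≤ kd / 2 ∧ c0 ≤ ε * kp / 2 * (1 + m) :=
    ⟨min (kd / 2) (ε * kp / 2 * (1 + m)), lt_min (by positivity) (by positivity),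
      min_le_left _ _, min_le_right _ _⟩
  obtain ⟨l, hl, hlK⟩ : ∃ l : ℝ, 0 < l ∧ l * (kp + ε + 1) = c0 := by
    have hK : (0:ℝ) < kp + ε + 1 := by positivity
    exact ⟨c0 / (kp + ε + 1), by positivity, by field_simp⟩
  have hWderiv : ∀ t, 0 < t → deriv W t ≤ -l * W t := by
    intro t ht
    have ht0 : (0:ℝ) ≤ t := ht.le
    have hDW : deriv W t =
        -(kd * N t) + ε * N t * A t + ε * kp * (A t * A t - 1) + ε * kd * B t := by
      rw [(hW' t).deriv, hdd_p t ht0, hdd_e3 t ht0]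
      ring
    set n := N t with hndef
    set a := A t with hadef
    set b := B t with hbdef
    have hn : 0 ≤ n := hN0 t
    have ha1 : a ≤ 1 := hA1 t ht0
    have ham : m ≤ a := hAm t ht0
    have ham1 : -1 < a := lt_of_lt_of_le hm ham
    have hq0 : 0 ≤ 1 - a * a := by nlinarith
    have h1a : (0:ℝ) ≤ 1 - a := by linarith
    have hbq : b ^ 2 ≤ n * (1 - a * a) := hb2 t ht0
    have g1 : 2 * (kp * kd) * b ≤ kd ^ 2 * n + kp ^ 2 * (1 - a * a) := amgm2 hn hq0 hbq
    have hq2 : (1 + m) * (1 - a) ≤ 1 - a * a := by nlinarith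
    -- scaled auxiliary inequalities
    have d1 : 2 * kp * (ε * n * a) ≤ 2 * kp * (ε * n * 1) :=
      mul_le_mul_of_nonneg_left
        (mul_le_mul_of_nonneg_left ha1 (mul_nonneg hε.le hn)) (by positivity)
    have d2 : ε * (2 * (kp * kd) * b) ≤ ε * (kd ^ 2 * n + kp ^ 2 * (1 - a * a)) :=
      mul_le_mul_of_nonneg_left g1 hε.le
    have d3 : ε * kd ^ 2 * n ≤ (kd * kp - 2 * kp * ε) * n :=
      mul_le_mul_of_nonneg_right (by linarith [hε3]) hn
    have d4 : ε * kp ^ 2 * ((1 + m) * (1 - a)) ≤ ε * kp ^ 2 * (1 - a * a) :=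
      mul_le_mul_of_nonneg_left hq2 (by positivity)
    have d5 : 2 * kp * c0 * n ≤ kp * kd * n := by
      refine mul_le_mul_of_nonneg_right ?_ hn
      calc 2 * kp * c0 ≤ 2 * kp * (kd / 2) :=
            mul_le_mul_of_nonneg_left hc0a (by positivity)
        _ = kp * kd := by ring
    have d6 : 2 * kp * c0 * (1 - a) ≤ ε * kp ^ 2 * (1 + m) * (1 - a) := by
      refine mul_le_mul_of_nonneg_right ?_ h1a
      calc 2 * kp * c0 ≤ 2 * kp * (ε * kp / 2 * (1 + m)) :=
            mul_le_mul_of_nonneg_left hc0b (by positivity)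
        _ = ε * kp ^ 2 * (1 + m) := by ring
    -- bound deriv W by -c0 * ((1 - a) + n)
    have h1 : deriv W t ≤ -c0 * ((1 - a) + n) := by
      rw [hDW]
      rw [← mul_le_mul_iff_right₀ (show (0:ℝ) < 2 * kp by positivity)]
      linarith [d1, d2, d3, d4, d5, d6]
    -- bound W above by (kp + ε + 1) * ((1 - a) + n)
    have h2 : W t ≤ (kp + ε + 1) * ((1 - a) + n) := by
      have hb2' : (-b) ^ 2 ≤ n * (2 * (1 - a)) := by
        nlinarith [hbq, mul_nonneg hn (sq_nonneg (1 - a))]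
      have g2 : 2 * ((1:ℝ) * 1) * (-b) ≤ 1 ^ 2 * n + 1 ^ 2 * (2 * (1 - a)) :=
        amgm2 hn (by linarith) hb2'
      have hb' : -b ≤ (1 / 2) * n + (1 - a) := by linarith [g2]
      have h5 : ε * (-b) ≤ ε * ((1 / 2) * n + (1 - a)) := mul_le_mul_of_nonneg_left hb' hε.le
      have hWt : W t = kp * (1 - a) + (1 / 2) * n - ε * b := rfl
      rw [hWt]
      linarith [h5, mul_nonneg hkp.le hn, mul_nonneg hε.le hn, hn, h1a,
        mul_nonneg hkp.le h1a, mul_nonneg hε.le h1a]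
    have h3 : l * W t ≤ c0 * ((1 - a) + n) := by
      have h6 := mul_le_mul_of_nonneg_left h2 (le_of_lt hl)
      calc l * W t ≤ l * ((kp + ε + 1) * ((1 - a) + n)) := h6
        _ = (l * (kp + ε + 1)) * ((1 - a) + n) := by ring
        _ = c0 * ((1 - a) + n) := by rw [hlK]
    linarith
  have hWd := decay hl hWdiff hWderiv
  -- V is controlled by W
  have hVW : ∀ t, 0 ≤ t → V t ≤ 2 * W t := by
    intro t ht
    have hn : 0 ≤ N t := hN0 t
    have ha1 : A t ≤ 1 := hA1 t ht
    have h1a : (0:ℝ) ≤ 1 - A t := by linarith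
    have hbq : B t ^ 2 ≤ N t * (1 - A t * A t) := hb2 t ht
    have hbq2 : B t ^ 2 ≤ N t * (2 * (1 - A t)) := by
      nlinarith [hbq, mul_nonneg hn (sq_nonneg (1 - A t))]
    have g2 : 2 * ((1:ℝ) * 1) * B t ≤ 1 ^ 2 * N t + 1 ^ 2 * (2 * (1 - A t)) :=
      amgm2 hn (by linarith) hbq2
    have hb' : B t ≤ (1 / 2) * N t + (1 - A t) := by linarith [g2]
    have h5 : ε * B t ≤ ε * ((1 / 2) * N t + (1 - A t)) := mul_le_mul_of_nonneg_left hb' hε.le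
    have hWt : W t = kp * (1 - A t) + (1 / 2) * N t - ε * B t := rfl
    have hVt : V t = kp * (1 - A t) + (1 / 2) * N t := rfl
    rw [hWt, hVt]
    have h6 : ε * N t ≤ (1 / 2) * N t := by
      have := mul_le_mul_of_nonneg_right hε2 hn
      linarith [this]
    have h7 : 2 * ε * (1 - A t) ≤ kp * (1 - A t) := by
      refine mul_le_mul_of_nonneg_right ?_ h1a
      linarith [hε1]
    linarith [h5, h6, h7]
  -- exponential upper bound for V
  obtain ⟨G, hVexp, hG0⟩ : ∃ G : ℝ → ℝ, (∀ t, 0 ≤ t → V t ≤ G t) ∧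
      Filter.Tendsto G Filter.atTop (nhds 0) := by
    refine ⟨fun t => 2 * W 0 * Real.exp (-(l * t)), ?_, ?_⟩
    · intro t ht
      have h1 := hVW t ht
      have h2 := hWd t ht
      have h3 : (0:ℝ) < Real.exp (-(l * t)) := Real.exp_pos _
      simp only []
      linarith
    · have h1 : Filter.Tendsto (fun t : ℝ => l * t) Filter.atTop Filter.atTop :=
        Filter.Tendsto.const_mul_atTop hl Filter.tendsto_id
      have h2 : Filter.Tendsto (fun t : ℝ => Real.exp (-(l * t))) Filter.atTop (nhds 0) :=
        Real.tendsto_exp_atBot.comp (Filter.tendsto_neg_atTop_atBot.comp h1)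
      have h3 := h2.const_mul (2 * W 0)
      simpa using h3
  have hA1V : ∀ t, 0 ≤ t → kp * (1 - A t) ≤ G t :=
    fun t ht => le_trans (hVlb t ht) (hVexp t ht)
  -- N t → 0
  have hNlim : Filter.Tendsto N Filter.atTop (nhds 0) := by
    apply squeeze_zero' (g := fun t => 2 * G t)
    · exact Filter.Eventually.of_forall (fun t => hN0 t)
    · filter_upwards [Filter.eventually_ge_atTop (0:ℝ)] with t ht
      have h1 : kp * (1 - A t) + (1 / 2) * N t ≤ G t := hVexp t ht
      have h2 : 0 ≤ kp * (1 - A t) := mul_nonneg hkp.le (by linarith [hA1 t ht])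
      linarith
    · simpa using hG0.const_mul 2
  -- deriv φ → 0
  have hderiv0 : Filter.Tendsto (deriv φ) Filter.atTop (nhds 0) := by
    rw [tendsto_zero_iff_norm_tendsto_zero]
    have h1 : (fun t => ‖deriv φ t‖) = fun t => Real.sqrt (N t) := by
      funext t; rw [hNnorm t, Real.sqrt_sq (norm_nonneg _)]
    rw [h1]
    have h2 := (Real.continuous_sqrt.tendsto 0).comp hNlim
    simpa [Function.comp_def] using h2
  -- φ → e3
  have hphi : Filter.Tendsto φ Filter.atTop (nhds e3) := by
    have hdist : Filter.Tendsto (fun t => ‖φ t - e3‖ ^ 2) Filter.atTop (nhds 0) := by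
      apply squeeze_zero' (g := fun t => (2 / kp) * G t)
      · exact Filter.Eventually.of_forall (fun t => sq_nonneg _)
      · filter_upwards [Filter.eventually_ge_atTop (0:ℝ)] with t ht
        have hnorm : ‖φ t - e3‖ ^ 2 = 2 - 2 * A t := by
          rw [← real_inner_self_eq_norm_sq]
          have h4 : ⟪e3, φ t⟫_ℝ = ⟪φ t, e3⟫_ℝ := real_inner_comm _ _
          simp only [inner_sub_left, inner_sub_right, hφφ t ht, inner_e3_e3, h4, hAdef]
          try ring
        rw [hnorm]
        have h6 := hA1V t ht
        have h7 : (2 / kp) * (kp * (1 - A t)) ≤ (2 / kp) * G t :=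
          mul_le_mul_of_nonneg_left h6 (by positivity)
        have h8 : (2 / kp) * (kp * (1 - A t)) = 2 - 2 * A t := by
          field_simp
        linarith
      · simpa using hG0.const_mul (2 / kp)
    rw [tendsto_iff_norm_sub_tendsto_zero]
    have h2 := (Real.continuous_sqrt.tendsto 0).comp hdist
    have h3 : ((fun x => Real.sqrt x) ∘ fun t => ‖φ t - e3‖ ^ 2) = fun t => ‖φ t - e3‖ := by
      funext t; exact Real.sqrt_sq (norm_nonneg _)
    rw [h3] at h2
    simpa using h2
  exact ⟨hphi, hderiv0⟩
end
end

section
/- Let k₁, k₂ > 0 and let φ, φ_d : ℝ → ℝ³ be twice differentiable curves satisfying ‖φ(t)‖ = ‖φ_d(t)‖ = 1, ⟨φ(t), φ̇(t)⟩ = 0, and ⟨φ_d(t), φ̇_d(t)⟩ = 0 for all t. Define the transported reference velocity τ(φ, φ_d)φ̇_d := (φ_d × φ̇_d) × φ, the velocity error v_e := φ̇ − (φ_d × φ̇_d) × φ, and the feedforward term FF := ⟨φ, φ_d × φ̇_d⟩·(φ × φ̇) + (φ_d × φ̈_d) × φ. If φ solves the closed-loop tracking equation φ̈ = −‖φ̇‖²·φ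 − k₁·(φ × (φ × φ_d)) − k₂·v_e + FF, then the tracking Lyapunov function V₂(t) = k₁·(1 − ⟨φ(t), φ_d(t)⟩) + (1/2)·‖v_e(t)‖² satisfies dV₂/dt = −k₂·‖v_e(t)‖² ≤ 0 for all t. -/
open scoped InnerProductSpace

noncomputable section

private lemma hasDerivAt_E3 {F : ℝ → E3} {V : E3} {t : ℝ}
    (h : ∀ i, HasDerivAt (fun s => F s i) (V i) t) : HasDerivAt F V t :=
  ((PiLp.continuousLinearEquiv 2 ℝ (fun _ : Fin 3 => ℝ)).symm.hasFDerivAt.comp_hasDerivAt t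
    (hasDerivAt_pi.2 h))

private lemma hasDerivAt_E3_apply {F : ℝ → E3} {V : E3} {t : ℝ}
    (h : HasDerivAt F V t) (i : Fin 3) : HasDerivAt (fun s => F s i) (V i) t :=
  hasDerivAt_pi.1
    ((PiLp.continuousLinearEquiv 2 ℝ (fun _ : Fin 3 => ℝ)).hasFDerivAt.comp_hasDerivAt t h) i

private lemma HasDerivAt.crossD {f g : ℝ → E3} {f' g' : E3} {t : ℝ}
    (hf : HasDerivAt f f' t) (hg : HasDerivAt g g' t) :
    HasDerivAt (fun s => cross (f s) (g s)) (cross f' (g t) + cross (f t) g') t := by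
  apply hasDerivAt_E3
  intro i
  have h0 := hasDerivAt_E3_apply hf 0
  have h1 := hasDerivAt_E3_apply hf 1
  have h2 := hasDerivAt_E3_apply hf 2
  have g0 := hasDerivAt_E3_apply hg 0
  have g1 := hasDerivAt_E3_apply hg 1
  have g2 := hasDerivAt_E3_apply hg 2
  fin_cases i
  · exact (((h1.mul g2).sub (h2.mul g1)).congr_deriv (by
      simp [cross, PiLp.add_apply]; ring))
  · exact (((h2.mul g0).sub (h0.mul g2)).congr_deriv (by
      simp [cross, PiLp.add_apply]; ring))
  · exact (((h0.mul g1).sub (h1.mul g0)).congr_deriv (by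
      simp [cross, PiLp.add_apply]; ring))
set_option maxHeartbeats 2000000 in
/-- For curves φ, φ_d on the unit 2-sphere, with transported reference
velocity `τ(φ,φ_d)φ̇_d = (φ_d × φ̇_d) × φ`, velocity error `v_e = φ̇ − (φ_d × φ̇_d) × φ`
and feedforward `FF = ⟨φ, φ_d × φ̇_d⟩ (φ × φ̇) + (φ_d × φ̈_d) × φ`, if φ solves the
closed-loop tracking equation
`φ̈ = −‖φ̇‖²φ − k₁ (φ × (φ × φ_d)) − k₂ v_e + FF`,
then the tracking Lyapunov function `V₂ = k₁ (1 − ⟨φ, φ_d⟩) + ½‖v_e‖²` satisfies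
`V̇₂ = −k₂‖v_e‖² ≤ 0`. -/
theorem lyapunov_derivative_tracking_on_sphere
    (k₁ k₂ : ℝ) (hk₁ : 0 < k₁) (hk₂ : 0 < k₂)
    (φ φd : ℝ → E3)
    (hφ : Differentiable ℝ φ) (hφ' : Differentiable ℝ (deriv φ))
    (hφd : Differentiable ℝ φd) (hφd' : Differentiable ℝ (deriv φd))
    (hsph : ∀ t, ‖φ t‖ = 1) (hsphd : ∀ t, ‖φd t‖ = 1)
    (horth : ∀ t, ⟪φ t, deriv φ t⟫_ℝ = 0)
    (horthd : ∀ t, ⟪φd t, deriv φd t⟫_ℝ = 0)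
    (ve : ℝ → E3)
    (hve : ∀ t, ve t = deriv φ t - cross (cross (φd t) (deriv φd t)) (φ t))
    (FF : ℝ → E3)
    (hFF : ∀ t, FF t = ⟪φ t, cross (φd t) (deriv φd t)⟫_ℝ • cross (φ t) (deriv φ t) +
      cross (cross (φd t) (deriv (deriv φd) t)) (φ t))
    (heqn : ∀ t, deriv (deriv φ) t =
      -(‖deriv φ t‖ ^ 2 • φ t) - k₁ • cross (φ t) (cross (φ t) (φd t)) -
        k₂ • ve t + FF t) :
    ∀ t, HasDerivAt (fun s => k₁ * (1 - ⟪φ s, φd s⟫_ℝ) + (1 / 2) * ‖ve s‖ ^ 2)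
        (-(k₂ * ‖ve t‖ ^ 2)) t ∧ -(k₂ * ‖ve t‖ ^ 2) ≤ 0 := by
  intro t
  refine ⟨?_, neg_nonpos.mpr (by positivity)⟩
  have ha : HasDerivAt φ (deriv φ t) t := (hφ t).hasDerivAt
  have hp : HasDerivAt (deriv φ) (deriv (deriv φ) t) t := (hφ' t).hasDerivAt
  have hb : HasDerivAt φd (deriv φd t) t := (hφd t).hasDerivAt
  have hq : HasDerivAt (deriv φd) (deriv (deriv φd) t) t := (hφd' t).hasDerivAt
  have hv := hp.sub ((hb.crossD hq).crossD ha)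
  have hmain := (((hasDerivAt_const t (1:ℝ)).sub (ha.inner ℝ hb)).const_mul k₁).add
    ((hv.inner ℝ hv).const_mul ((1:ℝ)/2))
  have hfun : (fun s => k₁ * (1 - ⟪φ s, φd s⟫_ℝ) + (1 / 2) * ‖ve s‖ ^ 2)
      = fun s => k₁ * (1 - ⟪φ s, φd s⟫_ℝ) + 1 / 2 *
        ⟪deriv φ s - cross (cross (φd s) (deriv φd s)) (φ s),
         deriv φ s - cross (cross (φd s) (deriv φd s)) (φ s)⟫_ℝ := by
    funext s
    rw [← real_inner_self_eq_norm_sq, hve s]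
  rw [hfun]
  refine hmain.congr_deriv ?_
  symm
  have hA : φ t 0 * φ t 0 + φ t 1 * φ t 1 + φ t 2 * φ t 2 = 1 := by
    have h := real_inner_self_eq_norm_sq (φ t)
    rw [hsph t] at h
    simp only [PiLp.inner_apply, RCLike.inner_apply, conj_trivial, Fin.sum_univ_three] at h
    linear_combination h
  have hB : φd t 0 * φd t 0 + φd t 1 * φd t 1 + φd t 2 * φd t 2 = 1 := by
    have h := real_inner_self_eq_norm_sq (φd t)
    rw [hsphd t] at h
    simp only [PiLp.inner_apply, RCLike.inner_apply, conj_trivial, Fin.sum_univ_three] at h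
    linear_combination h
  have h1 : φ t 0 * deriv φ t 0 + φ t 1 * deriv φ t 1 + φ t 2 * deriv φ t 2 = 0 := by
    have h := horth t
    simp only [PiLp.inner_apply, RCLike.inner_apply, conj_trivial, Fin.sum_univ_three] at h
    linear_combination h
  have h2 : φd t 0 * deriv φd t 0 + φd t 1 * deriv φd t 1 + φd t 2 * deriv φd t 2 = 0 := by
    have h := horthd t
    simp only [PiLp.inner_apply, RCLike.inner_apply, conj_trivial, Fin.sum_univ_three] at h
    linear_combination h
  simp only [← real_inner_self_eq_norm_sq]
  rw [heqn t, hFF t, hve t]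
  simp only [← real_inner_self_eq_norm_sq]
  simp only [PiLp.inner_apply, RCLike.inner_apply, conj_trivial, Fin.sum_univ_three, cross,
    PiLp.sub_apply, PiLp.add_apply, PiLp.smul_apply, PiLp.neg_apply, smul_eq_mul,
    Matrix.cons_val_zero, Matrix.cons_val_one, Matrix.head_cons, Matrix.cons_val_two,
    Matrix.tail_cons, WithLp.ofLp_toLp, Pi.sub_apply]
  linear_combination -((-(deriv φ t 0 * deriv φ t 0 + deriv φ t 1 * deriv φ t 1 + deriv φ t 2 * deriv φ t 2) - k₁ * (φ t 0 * φd t 0 + φ t 1 * φd t 1 + φ t 2 * φd t 2) - (φ t 0 * (φd t 1 * deriv φd t 2 - φd t 2 * deriv φd t 1) + φ t 1 * (φd t 2 * deriv φd t 0 - φd t 0 * deriv φd t 2) + φ t 2 * (φd t 0 * deriv φd t 1 - φd t 1 * deriv φd t 0)) ^ 2 + ((φd t 1 * deriv φd t 2 - φd t 2 * deriv φd t 1) * (φd t 1 * deriv φd t 2 - φd t 2 * deriv φd t 1) + (φd t 2 * deriv φd t 0 - φd t 0 * deriv φd t 2) * (φd t 2 * deriv φd t 0 - φd t 0 * deriv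 φd t 2) + (φd t 0 * deriv φd t 1 - φd t 1 * deriv φd t 0) * (φd t 0 * deriv φd t 1 - φd t 1 * deriv φd t 0))) * h1 + (k₁ * (deriv φ t 0 * φd t 0 + deriv φ t 1 * φd t 1 + deriv φ t 2 * φd t 2) + (φ t 0 * (φd t 1 * deriv φd t 2 - φd t 2 * deriv φd t 1) + φ t 1 * (φd t 2 * deriv φd t 0 - φd t 0 * deriv φd t 2) + φ t 2 * (φd t 0 * deriv φd t 1 - φd t 1 * deriv φd t 0)) * (deriv φ t 0 * (φd t 1 * deriv φd t 2 - φd t 2 * deriv φd t 1) + deriv φ t 1 * (φd t 2 * deriv φd t 0 - φd t 0 * deriv φd t 2) + deriv φ t 2 * (φd t 0 * deriv φd t 1 - φd t 1 * deriv φd t 0)) + k₁ * (φ t 0 * deriv φd t 0 + φ t 1 * deriv φd t 1 + φ t 2 * deriv φd t 2) * (φd t 0 * φd t 0 + φd t 1 * φd t 1 + φd t 2 * φd t 2)) * hA + (k₁ * (φ t 0 * deriv φd t 0 + φ t 1 * deriv φd t 1 + φ t 2 * deriv φd t 2)) * hB + (-k₁ * (φ t 0 * φ t 0 + φ t 1 *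 φ t 1 + φ t 2 * φ t 2) * (φ t 0 * φd t 0 + φ t 1 * φd t 1 + φ t 2 * φd t 2)) * h2)
end
end

section
/- Let k_p, k_d be real constants, let c : ℝ → ℝ be a function, let z, z_d : ℝ → ℝ³ be curves, and let y : ℝ → ℝ³ be a twice differentiable curve with ‖y(t)‖ = 1 and ⟨y(t), ẏ(t)⟩ = 0 for all t satisfying the perturbed pendulum equation ÿ + ‖ẏ‖²·y = −k_p·(y × (y × e₃)) − k_d·ẏ + c(t)·(y × (y × (z(t) − z_d(t)))). Then the Lyapunov function V₁(t) = k_p·(1 − ⟨y(t), e₃⟩) + (1/2)·‖ẏ(t)‖² satisfies dV₁/dt = −k_d·‖ẏ(t)‖² + c(t)·⟨y × (y × (z − z_d)), ẏ⟩ for all t. -/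
open scoped InnerProductSpace

noncomputable section

lemma cross_inner_e3 (a v : E3) (ha : ⟪a, a⟫_ℝ = 1) (hav : ⟪a, v⟫_ℝ = 0) :
    ⟪cross a (cross a e3), v⟫_ℝ = -⟪e3, v⟫_ℝ := by
  simp only [cross, e3, PiLp.toLp_apply, PiLp.inner_apply, RCLike.inner_apply, starRingEnd_apply, star_trivial,
    Fin.sum_univ_three, Matrix.cons_val_zero, Matrix.cons_val_one, Matrix.head_cons,
    Matrix.cons_val_two, Matrix.tail_cons] at *
  linear_combination a 2 * hav - v 2 * ha

/-- For a twice differentiable curve y on the unit 2-sphere solving the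
perturbed pendulum equation
`ÿ + ‖ẏ‖²y = −k_p (y × (y × e₃)) − k_d ẏ + c(t) (y × (y × (z − z_d)))`,
the Lyapunov function `V₁ = k_p (1 − ⟨y, e₃⟩) + ½‖ẏ‖²` satisfies
`V̇₁ = −k_d‖ẏ‖² + c(t) ⟨y × (y × (z − z_d)), ẏ⟩`. -/
theorem lyapunov_derivative_perturbed_pendulum
    (kp kd : ℝ) (c : ℝ → ℝ) (z zd : ℝ → E3)
    (y : ℝ → E3)
    (hy : Differentiable ℝ y) (hy' : Differentiable ℝ (deriv y))
    (hsph : ∀ t, ‖y t‖ = 1)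
    (horth : ∀ t, ⟪y t, deriv y t⟫_ℝ = 0)
    (heqn : ∀ t, deriv (deriv y) t + ‖deriv y t‖ ^ 2 • y t =
      -(kp • cross (y t) (cross (y t) e3)) - kd • deriv y t +
        c t • cross (y t) (cross (y t) (z t - zd t))) :
    ∀ t, HasDerivAt (fun s => kp * (1 - ⟪y s, e3⟫_ℝ) + (1 / 2) * ‖deriv y s‖ ^ 2)
        (-(kd * ‖deriv y t‖ ^ 2) +
          c t * ⟪cross (y t) (cross (y t) (z t - zd t)), deriv y t⟫_ℝ) t := by
  intro t
  have hdy : HasDerivAt y (deriv y t) t := (hy t).hasDerivAt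
  have hddy : HasDerivAt (deriv y) (deriv (deriv y) t) t := (hy' t).hasDerivAt
  have h1 : HasDerivAt (fun s => ⟪y s, e3⟫_ℝ) ⟪deriv y t, e3⟫_ℝ t := by
    have := (hdy.inner ℝ (hasDerivAt_const t e3))
    simpa using this
  have h2 : HasDerivAt (fun s => ⟪deriv y s, deriv y s⟫_ℝ)
      (⟪deriv y t, deriv (deriv y) t⟫_ℝ + ⟪deriv (deriv y) t, deriv y t⟫_ℝ) t :=
    hddy.inner ℝ hddy
  have hfun : (fun s => kp * (1 - ⟪y s, e3⟫_ℝ) + (1 / 2) * ‖deriv y s‖ ^ 2) =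
      (fun s => kp * (1 - ⟪y s, e3⟫_ℝ) + (1 / 2) * ⟪deriv y s, deriv y s⟫_ℝ) := by
    funext s
    rw [real_inner_self_eq_norm_sq]
  have hD : HasDerivAt (fun s => kp * (1 - ⟪y s, e3⟫_ℝ) + (1 / 2) * ⟪deriv y s, deriv y s⟫_ℝ)
      (kp * (0 - ⟪deriv y t, e3⟫_ℝ) +
        (1 / 2) * (⟪deriv y t, deriv (deriv y) t⟫_ℝ + ⟪deriv (deriv y) t, deriv y t⟫_ℝ)) t :=
    (((hasDerivAt_const t (1:ℝ)).sub h1).const_mul kp).add (h2.const_mul (1/2))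
  rw [hfun]
  convert hD using 1
  have hacc : deriv (deriv y) t =
      -(‖deriv y t‖ ^ 2 • y t) + (-(kp • cross (y t) (cross (y t) e3)) - kd • deriv y t +
        c t • cross (y t) (cross (y t) (z t - zd t))) := by
    have := heqn t
    linear_combination (norm := module) this
  have ha1 : ⟪y t, y t⟫_ℝ = 1 := by
    rw [real_inner_self_eq_norm_sq, hsph t]; norm_num
  have hcr : ⟪cross (y t) (cross (y t) e3), deriv y t⟫_ℝ = -⟪e3, deriv y t⟫_ℝ :=
    cross_inner_e3 (y t) (deriv y t) ha1 (horth t)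
  have hinner : ⟪deriv (deriv y) t, deriv y t⟫_ℝ =
      kp * ⟪e3, deriv y t⟫_ℝ - kd * ‖deriv y t‖ ^ 2 +
        c t * ⟪cross (y t) (cross (y t) (z t - zd t)), deriv y t⟫_ℝ := by
    rw [hacc]
    simp only [inner_add_left, inner_sub_left, inner_neg_left, inner_smul_left,
      RCLike.star_def, starRingEnd_apply, star_trivial]
    rw [horth t, hcr, real_inner_self_eq_norm_sq]
    ring
  have hinner2 : ⟪deriv y t, deriv (deriv y) t⟫_ℝ =
      kp * ⟪e3, deriv y t⟫_ℝ - kd * ‖deriv y t‖ ^ 2 +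
        c t * ⟪cross (y t) (cross (y t) (z t - zd t)), deriv y t⟫_ℝ := by
    rw [real_inner_comm]; exact hinner
  rw [hinner2, hinner, real_inner_comm e3 (deriv y t)]
  ring
end
end

section
/- Let z, z_d, w, w_d ∈ ℝ³ with ‖z‖ = ‖z_d‖ = 1, ⟨z, w⟩ = 0, and ⟨z_d, w_d⟩ = 0. Then ⟨z × (z × z_d), w − (z_d × w_d) × z⟩ = −⟨w, z_d⟩ − ⟨z, w_d⟩. Consequently, for curves z, z_d on the unit sphere with velocities ż, ż_d, the time derivative of the error potential 1 − ⟨z, z_d⟩ equals ⟨(ẑ)² z_d, v_e⟩ where v_e = ż − (z_d × ż_d) × z; i.e., the transport map τ(z, z_d)ż_d = (z_d × ż_d) × z is compatible with the potential k₁(1 − ⟨z, z_d⟩). -/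
open scoped InnerProductSpace

noncomputable section

lemma key_identity (z zd w wd : E3) (hz : ⟪z, z⟫_ℝ = 1) (hzd : ⟪zd, zd⟫_ℝ = 1)
    (hw : ⟪z, w⟫_ℝ = 0) (hwd : ⟪zd, wd⟫_ℝ = 0) :
    ⟪cross z (cross z zd), w - cross (cross zd wd) z⟫_ℝ = -⟪w, zd⟫_ℝ - ⟪z, wd⟫_ℝ := by
  simp only [PiLp.inner_apply, RCLike.inner_apply, conj_trivial, Fin.sum_univ_three, cross,
    Matrix.cons_val_zero, Matrix.cons_val_one, Matrix.head_cons, Matrix.cons_val_two,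
    Matrix.tail_cons, PiLp.sub_apply, PiLp.toLp_apply] at *
  set p := z 0 * zd 0 + z 1 * zd 1 + z 2 * zd 2 with hp
  linear_combination p * hw + (z 0^2 + z 1^2 + z 2^2) * p * hwd
    + (-(zd 0 * w 0 + zd 1 * w 1 + zd 2 * w 2) - (z 0 * wd 0 + z 1 * wd 1 + z 2 * wd 2)) * hz
    + (-(z 0 * wd 0 + z 1 * wd 1 + z 2 * wd 2) * (z 0^2 + z 1^2 + z 2^2)) * hzd

/-- For unit vectors z, z_d and tangent vectors w ⊥ z, w_d ⊥ z_d,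
`⟨z × (z × z_d), w − (z_d × w_d) × z⟩ = −⟨w, z_d⟩ − ⟨z, w_d⟩`.
Consequently, for curves z, z_d on the unit sphere, the derivative of the error
potential `1 − ⟨z, z_d⟩` equals `⟨(ẑ)² z_d, v_e⟩` with `v_e = ż − (z_d × ż_d) × z`;
i.e. the transport map `τ(z,z_d)ż_d = (z_d × ż_d) × z` is compatible with the
potential `k₁ (1 − ⟨z, z_d⟩)`. -/
theorem transport_map_compatible_with_error_potential
    (z zd w wd : E3) (hz : ‖z‖ = 1) (hzd : ‖zd‖ = 1)
    (hw : ⟪z, w⟫_ℝ = 0) (hwd : ⟪zd, wd⟫_ℝ = 0) :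
    ⟪cross z (cross z zd), w - cross (cross zd wd) z⟫_ℝ = -⟪w, zd⟫_ℝ - ⟪z, wd⟫_ℝ ∧
    ∀ (zc zdc : ℝ → E3),
      Differentiable ℝ zc → Differentiable ℝ zdc →
      (∀ t, ‖zc t‖ = 1) → (∀ t, ‖zdc t‖ = 1) →
      (∀ t, ⟪zc t, deriv zc t⟫_ℝ = 0) → (∀ t, ⟪zdc t, deriv zdc t⟫_ℝ = 0) →
      ∀ t, HasDerivAt (fun s => 1 - ⟪zc s, zdc s⟫_ℝ)
        (⟪cross (zc t) (cross (zc t) (zdc t)),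
          deriv zc t - cross (cross (zdc t) (deriv zdc t)) (zc t)⟫_ℝ) t := by
  have inner_one : ∀ v : E3, ‖v‖ = 1 → ⟪v, v⟫_ℝ = 1 := by
    intro v hv
    rw [real_inner_self_eq_norm_sq, hv]; norm_num
  constructor
  · exact key_identity z zd w wd (inner_one z hz) (inner_one zd hzd) hw hwd
  · intro zc zdc hdz hdzd hnz hnzd hoz hozd t
    have h1 : HasDerivAt (fun s => ⟪zc s, zdc s⟫_ℝ)
        (⟪zc t, deriv zdc t⟫_ℝ + ⟪deriv zc t, zdc t⟫_ℝ) t :=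
      HasDerivAt.inner ℝ (hdz t).hasDerivAt (hdzd t).hasDerivAt
    have h2 := (hasDerivAt_const t (1:ℝ)).sub h1
    have heq : ⟪cross (zc t) (cross (zc t) (zdc t)),
          deriv zc t - cross (cross (zdc t) (deriv zdc t)) (zc t)⟫_ℝ
        = 0 - (⟪zc t, deriv zdc t⟫_ℝ + ⟪deriv zc t, zdc t⟫_ℝ) := by
      rw [key_identity (zc t) (zdc t) (deriv zc t) (deriv zdc t)
        (inner_one _ (hnz t)) (inner_one _ (hnzd t)) (hoz t) (hozd t)]
      ring
    rw [heq]
    exact h2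
end
end

section
/- Let u : ℝ → ℝ³ be continuous and let y : ℝ → ℝ³ be a twice differentiable solution of the controlled pendulum equation ÿ(t) + ‖ẏ(t)‖²·y(t) = y(t) × (y(t) × u(t)) for all t. If ‖y(0)‖ = 1 and ⟨y(0), ẏ(0)⟩ = 0, then ‖y(t)‖ = 1 and ⟨y(t), ẏ(t)⟩ = 0 for all t; i.e., the controlled dynamics evolves on the unit 2-sphere. -/
open scoped InnerProductSpace

noncomputable section

lemma inner_cross_self (a b : E3) : ⟪a, cross a b⟫_ℝ = 0 := by
  simp only [cross, PiLp.inner_apply, RCLike.inner_apply, conj_trivial, Fin.sum_univ_three,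
    Matrix.cons_val_zero, Matrix.cons_val_one, Matrix.head_cons, Matrix.cons_val_two,
    Matrix.tail_cons]
  ring


/-- For a continuous control u and a twice differentiable solution y of
the controlled pendulum equation `ÿ + ‖ẏ‖²y = y × (y × u)`, if `‖y(0)‖ = 1` and
`⟨y(0), ẏ(0)⟩ = 0`, then `‖y(t)‖ = 1` and `⟨y(t), ẏ(t)⟩ = 0` for all t: the
controlled dynamics evolves on the unit 2-sphere. -/
theorem sphere_invariance_of_controlled_pendulum
    (u : ℝ → E3) (hu : Continuous u)
    (y : ℝ → E3)
    (hy : Differentiable ℝ y) (hy' : Differentiable ℝ (deriv y))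
    (heqn : ∀ t, deriv (deriv y) t + ‖deriv y t‖ ^ 2 • y t =
      cross (y t) (cross (y t) (u t)))
    (h0 : ‖y 0‖ = 1) (h0' : ⟪y 0, deriv y 0⟫_ℝ = 0) :
    ∀ t, ‖y t‖ = 1 ∧ ⟪y t, deriv y t⟫_ℝ = 0 := by
  set g : ℝ → ℝ := fun t => ⟪y t, y t⟫_ℝ with hgdef
  set h : ℝ → ℝ := fun t => ⟪y t, deriv y t⟫_ℝ with hhdef
  set E : ℝ → ℝ := fun t => (g t - 1) ^ 2 + h t ^ 2 with hEdef
  have hg : ∀ t, HasDerivAt g (2 * h t) t := by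
    intro t
    have := HasDerivAt.inner ℝ (hy t).hasDerivAt (hy t).hasDerivAt
    refine this.congr_deriv ?_
    simp only [hhdef]
    rw [real_inner_comm (deriv y t) (y t)]
    ring
  have hy'' : ∀ t, HasDerivAt (deriv y) (deriv (deriv y) t) t := fun t => (hy' t).hasDerivAt
  have hh : ∀ t, HasDerivAt h (‖deriv y t‖ ^ 2 * (1 - g t)) t := by
    intro t
    have key := HasDerivAt.inner ℝ (hy t).hasDerivAt (hy'' t)
    have heq : deriv (deriv y) t = cross (y t) (cross (y t) (u t)) - ‖deriv y t‖ ^ 2 • y t :=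
      eq_sub_of_add_eq (heqn t)
    refine key.congr_deriv ?_
    rw [heq, inner_sub_right, inner_smul_right, inner_cross_self]
    simp only [hgdef, real_inner_self_eq_norm_sq]
    ring
  set D : ℝ → ℝ := fun t =>
    2 * (g t - 1) * (2 * h t) + 2 * h t * (‖deriv y t‖ ^ 2 * (1 - g t)) with hDdef
  have hE : ∀ t, HasDerivAt E (D t) t := by
    intro t
    have h1 : HasDerivAt (fun t => (g t - 1) ^ 2) (2 * (g t - 1) * (2 * h t)) t := by
      have := ((hg t).sub_const 1).pow 2
      refine this.congr_deriv ?_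
      ring
    have h2 : HasDerivAt (fun t => h t ^ 2) (2 * h t * (‖deriv y t‖ ^ 2 * (1 - g t))) t := by
      have := (hh t).pow 2
      refine this.congr_deriv ?_
      ring
    exact h1.add h2
  have hEnonneg : ∀ t, 0 ≤ E t := fun t => by positivity
  have hDbound : ∀ t, |D t| ≤ (2 + ‖deriv y t‖ ^ 2) * E t := by
    intro t
    have ha : (0 : ℝ) ≤ ‖deriv y t‖ ^ 2 := by positivity
    rw [abs_le]
    constructor
    · simp only [hDdef, hEdef]
      nlinarith [sq_nonneg (g t - 1 + h t), sq_nonneg (g t - 1 - h t),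
        mul_nonneg ha (sq_nonneg (g t - 1 + h t)), mul_nonneg ha (sq_nonneg (g t - 1 - h t))]
    · simp only [hDdef, hEdef]
      nlinarith [sq_nonneg (g t - 1 + h t), sq_nonneg (g t - 1 - h t),
        mul_nonneg ha (sq_nonneg (g t - 1 + h t)), mul_nonneg ha (sq_nonneg (g t - 1 - h t))]
  have hE0 : E 0 = 0 := by
    simp only [hEdef, hgdef, hhdef, real_inner_self_eq_norm_sq, h0, h0']
    norm_num
  have hEcont : Continuous E := by
    have : Differentiable ℝ E := fun t => (hE t).differentiableAt
    exact this.continuous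
  -- main claim: E vanishes everywhere
  have hEzero : ∀ t, E t = 0 := by
    intro t
    set c : ℝ → ℝ := fun s => 2 + ‖deriv y s‖ ^ 2 with hcdef
    have hccont : ContinuousOn c (Set.uIcc 0 t) :=
      (continuous_const.add ((hy'.continuous.norm).pow 2)).continuousOn
    obtain ⟨K, hK⟩ := isCompact_uIcc.exists_bound_of_continuousOn hccont
    have hKc : ∀ s ∈ Set.uIcc 0 t, c s ≤ K := by
      intro s hs
      have := hK s hs
      rwa [Real.norm_eq_abs, abs_of_nonneg (by positivity)] at this
    rcases le_or_gt 0 t with ht | ht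
    · -- forward time: F s = E s * exp (-K * s) is antitone on [0, t]
      set F : ℝ → ℝ := fun s => E s * Real.exp (-K * s) with hFdef
      have hF : ∀ s, HasDerivAt F ((D s - K * E s) * Real.exp (-K * s)) s := by
        intro s
        have hexp : HasDerivAt (fun s : ℝ => Real.exp (-K * s)) (-K * Real.exp (-K * s)) s := by
          have := (Real.hasDerivAt_exp (-K * s)).comp s
            ((hasDerivAt_id s).const_mul (-K))
          refine this.congr_deriv ?_
          ring
        have := (hE s).mul hexp
        refine this.congr_deriv ?_
        ring
      have hanti : AntitoneOn F (Set.Icc 0 t) := by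
        apply antitoneOn_of_deriv_nonpos (convex_Icc 0 t)
          (fun s _ => ((hF s).continuousAt).continuousWithinAt)
          (fun s _ => ((hF s).differentiableAt).differentiableWithinAt)
        intro s hs
        rw [interior_Icc] at hs
        rw [(hF s).deriv]
        have hs' : s ∈ Set.uIcc 0 t := by
          rw [Set.uIcc_of_le ht]
          exact ⟨hs.1.le, hs.2.le⟩
        have h1 : D s ≤ K * E s := by
          calc D s ≤ |D s| := le_abs_self _
            _ ≤ c s * E s := hDbound s
            _ ≤ K * E s := mul_le_mul_of_nonneg_right (hKc s hs') (hEnonneg s)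
        have : D s - K * E s ≤ 0 := by linarith
        exact mul_nonpos_of_nonpos_of_nonneg this (Real.exp_nonneg _)
      have hFt : F t ≤ F 0 := hanti (Set.left_mem_Icc.2 ht) (Set.right_mem_Icc.2 ht) ht
      have hF0 : F 0 = 0 := by simp [hFdef, hE0]
      have : E t * Real.exp (-K * t) ≤ 0 := by rw [← hF0]; exact hFt
      have hEt := hEnonneg t
      nlinarith [Real.exp_pos (-K * t)]
    · -- backward time: F s = E s * exp (K * s) is monotone on [t, 0]
      set F : ℝ → ℝ := fun s => E s * Real.exp (K * s) with hFdef
      have hF : ∀ s, HasDerivAt F ((D s + K * E s) * Real.exp (K * s)) s := by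
        intro s
        have hexp : HasDerivAt (fun s : ℝ => Real.exp (K * s)) (K * Real.exp (K * s)) s := by
          have := (Real.hasDerivAt_exp (K * s)).comp s
            ((hasDerivAt_id s).const_mul K)
          refine this.congr_deriv ?_
          ring
        have := (hE s).mul hexp
        refine this.congr_deriv ?_
        ring
      have hmono : MonotoneOn F (Set.Icc t 0) := by
        apply monotoneOn_of_deriv_nonneg (convex_Icc t 0)
          (fun s _ => ((hF s).continuousAt).continuousWithinAt)
          (fun s _ => ((hF s).differentiableAt).differentiableWithinAt)
        intro s hs
        rw [interior_Icc] at hs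
        rw [(hF s).deriv]
        have hs' : s ∈ Set.uIcc 0 t := by
          rw [Set.uIcc_of_ge ht.le]
          exact ⟨hs.1.le, hs.2.le⟩
        have h1 : -(K * E s) ≤ D s := by
          have := (abs_le.mp (hDbound s)).1
          have h2 : (2 + ‖deriv y s‖ ^ 2) * E s ≤ K * E s :=
            mul_le_mul_of_nonneg_right (hKc s hs') (hEnonneg s)
          linarith
        have : 0 ≤ D s + K * E s := by linarith
        exact mul_nonneg this (Real.exp_nonneg _)
      have hFt : F t ≤ F 0 := hmono (Set.left_mem_Icc.2 ht.le) (Set.right_mem_Icc.2 ht.le) ht.le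
      have hF0 : F 0 = 0 := by simp [hFdef, hE0]
      have : E t * Real.exp (K * t) ≤ 0 := by rw [← hF0]; exact hFt
      have hEt := hEnonneg t
      nlinarith [Real.exp_pos (K * t)]
  intro t
  have hEt := hEzero t
  have hgt : g t = 1 := by
    simp only [hEdef] at hEt
    nlinarith [sq_nonneg (g t - 1), sq_nonneg (h t)]
  have hht : h t = 0 := by
    simp only [hEdef] at hEt
    nlinarith [sq_nonneg (g t - 1), sq_nonneg (h t)]
  constructor
  · have : ‖y t‖ ^ 2 = 1 := by
      rw [← real_inner_self_eq_norm_sq]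
      exact hgt
    nlinarith [norm_nonneg (y t)]
  · exact hht
end
end
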